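/- arXiv:1205.0478 — 2 statements merged into one kernel-verified Lean document; each statement's English description precedes it below -/
import Mathlib

section
/- Let $S=K[x_1,\dots,x_n,y_1,\dots,y_m]$ and let $L=\sum_{i=1}^s I_{q_i}J_{r_i}$ be a mixed product ideal with $0\le q_1<q_2<\dots<q_s\le n$ and $0\le r_s<r_{s-1}<\dots<r_1\le m$. Then the Alexander dual of $L$ equals $I_{n-q_1+1} + \sum_{i=1}^{s-1} I_{n-q_{i+1}+1} J_{m-r_i+1} + J_{m-r_s+1}$. -/
open MvPolynomial

/-- The squarefree Veronese ideal of degree `q` in the `x`-variables of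
`K[x_1,…,x_n,y_1,…,y_m]`.  Note `mixedI n m K 0 = ⊤` and `mixedI n m K q = 0`
for `q > n`, matching the conventions `I_0 = S`, `I_q = (0)` for `q > n`. -/
noncomputable def mixedI (n m : ℕ) (K : Type*) [Field K] (q : ℕ) :
    Ideal (MvPolynomial (Fin n ⊕ Fin m) K) :=
  Ideal.span {p | ∃ A : Finset (Fin n), A.card = q ∧ p = ∏ i ∈ A, X (Sum.inl i)}

/-- The squarefree Veronese ideal of degree `r` in the `y`-variables. -/
noncomputable def mixedJ (n m : ℕ) (K : Type*) [Field K] (r : ℕ) :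
    Ideal (MvPolynomial (Fin n ⊕ Fin m) K) :=
  Ideal.span {p | ∃ B : Finset (Fin m), B.card = r ∧ p = ∏ j ∈ B, X (Sum.inr j)}

/-- The Alexander dual of a squarefree monomial ideal `I`. -/
noncomputable def alexDual {σ : Type*} [Fintype σ] [DecidableEq σ] {K : Type*} [Field K]
    (I : Ideal (MvPolynomial σ K)) : Ideal (MvPolynomial σ K) :=
  Ideal.span {p | ∃ S : Finset σ, (∏ i ∈ Sᶜ, (X i : MvPolynomial σ K)) ∉ I ∧
    p = ∏ i ∈ S, X i}

section Infra

set_option linter.unusedSectionVars false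

variable {σ : Type*} [Fintype σ] [DecidableEq σ] {K : Type*} [Field K]

/-- exponent of a squarefree monomial -/
noncomputable def expF (T : Finset σ) : σ →₀ ℕ := ∑ i ∈ T, Finsupp.single i 1

lemma prodX_eq (T : Finset σ) :
    (∏ i ∈ T, (X i : MvPolynomial σ K)) = monomial (expF T) 1 := by
  classical
  induction T using Finset.induction with
  | empty => simp [expF]
  | insert _ _ h ih =>
    rw [Finset.prod_insert h, ih, X, monomial_mul, one_mul]
    congr 1
    rw [expF, expF, Finset.sum_insert h, add_comm]

lemma expF_apply (T : Finset σ) (i : σ) : expF T i = if i ∈ T then 1 else 0 := by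
  classical
  rw [expF, Finset.sum_apply']
  simp [Finsupp.single_apply, eq_comm]

lemma expF_le_iff {A T : Finset σ} : expF A ≤ expF T ↔ A ⊆ T := by
  constructor
  · intro h i hi
    have := (Finsupp.le_def.mp h) i
    rw [expF_apply, expF_apply, if_pos hi] at this
    by_contra hc
    rw [if_neg hc] at this; omega
  · intro h
    rw [Finsupp.le_def]
    intro i
    rw [expF_apply, expF_apply]
    by_cases hi : i ∈ A
    · rw [if_pos hi, if_pos (h hi)]
    · simp [hi]

/-- monomial membership in a span of squarefree monomials -/
lemma prodX_mem_span_iff {D : Set (Finset σ)} {T : Finset σ} :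
    (∏ i ∈ T, (X i : MvPolynomial σ K)) ∈
      Ideal.span ((fun U => ∏ i ∈ U, (X i : MvPolynomial σ K)) '' D) ↔
    ∃ U ∈ D, U ⊆ T := by
  constructor
  · intro h
    rw [Ideal.span, Submodule.mem_span_set'] at h
    obtain ⟨N, f, g, hfg⟩ := h
    have hc := congrArg (coeff (expF T)) hfg
    rw [prodX_eq, coeff_monomial, if_pos rfl] at hc
    by_contra hno
    push_neg at hno
    rw [coeff_sum] at hc
    have : ∀ i : Fin N, coeff (expF T) (f i • (g i : MvPolynomial σ K)) = 0 := by
      intro i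
      obtain ⟨p, hp⟩ := g i
      obtain ⟨U, hU, rfl⟩ := hp
      show coeff (expF T) (f i * ∏ j ∈ U, (X j : MvPolynomial σ K)) = 0
      rw [prodX_eq, coeff_mul_monomial',
        if_neg (by rw [expF_le_iff]; exact fun hc => hno U hU hc)]
    rw [Finset.sum_congr rfl (fun i _ => this i), Finset.sum_const_zero] at hc
    exact one_ne_zero hc.symm
  · rintro ⟨U, hU, hUT⟩
    have : (∏ i ∈ T, (X i : MvPolynomial σ K)) =
        (∏ i ∈ T \ U, (X i : MvPolynomial σ K)) * ∏ i ∈ U, (X i : MvPolynomial σ K) := by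
      rw [← Finset.prod_union (Finset.sdiff_disjoint), Finset.sdiff_union_of_subset hUT]
    rw [this]
    exact Ideal.mul_mem_left _ _ (Ideal.subset_span ⟨U, hU, rfl⟩)

/-- span of image of union of finset families -/
lemma span_img_sum {ι : Type*} (t : Finset ι) (G : ι → Set (Finset σ)) :
    (∑ i ∈ t, Ideal.span ((fun U => ∏ j ∈ U, (X j : MvPolynomial σ K)) '' G i)) =
      Ideal.span ((fun U => ∏ j ∈ U, (X j : MvPolynomial σ K)) '' ⋃ i ∈ t, G i) := by
  classical
  induction t using Finset.induction with
  | empty =>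
    simp only [Finset.sum_empty, Finset.notMem_empty, Set.iUnion_of_empty,
      Set.iUnion_empty, Set.image_empty, Ideal.span_empty]
    rfl
  | insert _ _ h ih =>
    rw [Finset.sum_insert h, ih]
    rw [Finset.set_biUnion_insert, Set.image_union, Ideal.span_union, Submodule.add_eq_sup]

lemma span_add_span (s t : Set (MvPolynomial σ K)) :
    Ideal.span s + Ideal.span t = Ideal.span (s ∪ t) := by
  rw [Ideal.span_union, Submodule.add_eq_sup]

end Infra

section Sums

variable {n m : ℕ}

lemma image_inl_subset {A : Finset (Fin n)} {S : Finset (Fin n ⊕ Fin m)} :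
    A.image Sum.inl ⊆ S ↔ A ⊆ S.toLeft := by
  simp [Finset.image_subset_iff, Finset.subset_iff]

lemma image_inr_subset {B : Finset (Fin m)} {S : Finset (Fin n ⊕ Fin m)} :
    B.image Sum.inr ⊆ S ↔ B ⊆ S.toRight := by
  simp [Finset.image_subset_iff, Finset.subset_iff]

lemma toLeft_image_inl (A : Finset (Fin n)) :
    ((A.image (Sum.inl : Fin n → Fin n ⊕ Fin m)).toLeft) = A := by
  ext x; simp

lemma toRight_image_inl (A : Finset (Fin n)) :
    ((A.image (Sum.inl : Fin n → Fin n ⊕ Fin m)).toRight) = (∅ : Finset (Fin m)) := by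
  ext x; simp

lemma toLeft_image_inr (B : Finset (Fin m)) :
    ((B.image (Sum.inr : Fin m → Fin n ⊕ Fin m)).toLeft) = (∅ : Finset (Fin n)) := by
  ext x; simp

lemma toRight_image_inr (B : Finset (Fin m)) :
    ((B.image (Sum.inr : Fin m → Fin n ⊕ Fin m)).toRight) = B := by
  ext x; simp

lemma toLeft_compl (S : Finset (Fin n ⊕ Fin m)) : (Sᶜ).toLeft = (S.toLeft)ᶜ := by
  ext x; simp

lemma toRight_compl (S : Finset (Fin n ⊕ Fin m)) : (Sᶜ).toRight = (S.toRight)ᶜ := by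
  ext x; simp

lemma card_le_fin {k : ℕ} (A : Finset (Fin k)) : A.card ≤ k := by
  simpa using Finset.card_le_univ A

lemma disj_inl_inr (A : Finset (Fin n)) (B : Finset (Fin m)) :
    Disjoint (A.image (Sum.inl : Fin n → Fin n ⊕ Fin m)) (B.image Sum.inr) := by
  simp [Finset.disjoint_left]

end Sums

section MixedEq

variable (n m : ℕ) (K : Type*) [Field K]

/-- generating family of `mixedI` -/
def GI (q : ℕ) : Set (Finset (Fin n ⊕ Fin m)) :=
  {U | ∃ A : Finset (Fin n), A.card = q ∧ U = A.image Sum.inl}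

/-- generating family of `mixedJ` -/
def GJ (r : ℕ) : Set (Finset (Fin n ⊕ Fin m)) :=
  {U | ∃ B : Finset (Fin m), B.card = r ∧ U = B.image Sum.inr}

/-- generating family of `mixedI * mixedJ` -/
def GIJ (q r : ℕ) : Set (Finset (Fin n ⊕ Fin m)) :=
  {U | ∃ (A : Finset (Fin n)) (B : Finset (Fin m)),
    A.card = q ∧ B.card = r ∧ U = A.image Sum.inl ∪ B.image Sum.inr}

lemma prod_inl_eq (A : Finset (Fin n)) :
    (∏ i ∈ A, (X (Sum.inl i) : MvPolynomial (Fin n ⊕ Fin m) K)) =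
      ∏ j ∈ A.image Sum.inl, X j :=
  (Finset.prod_image (fun x _ y _ h => Sum.inl_injective h)).symm

lemma prod_inr_eq (B : Finset (Fin m)) :
    (∏ j ∈ B, (X (Sum.inr j) : MvPolynomial (Fin n ⊕ Fin m) K)) =
      ∏ j ∈ B.image Sum.inr, X j :=
  (Finset.prod_image (fun x _ y _ h => Sum.inr_injective h)).symm

lemma mixedI_eq (q : ℕ) :
    mixedI n m K q =
      Ideal.span ((fun U => ∏ i ∈ U, (X i : MvPolynomial (Fin n ⊕ Fin m) K)) '' GI n m q) := by
  unfold mixedI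
  congr 1
  ext p
  constructor
  · rintro ⟨A, hA, rfl⟩
    exact ⟨A.image Sum.inl, ⟨A, hA, rfl⟩, (prod_inl_eq n m K A).symm⟩
  · rintro ⟨U, ⟨A, hA, rfl⟩, rfl⟩
    exact ⟨A, hA, (prod_inl_eq n m K A).symm⟩

lemma mixedJ_eq (r : ℕ) :
    mixedJ n m K r =
      Ideal.span ((fun U => ∏ i ∈ U, (X i : MvPolynomial (Fin n ⊕ Fin m) K)) '' GJ n m r) := by
  unfold mixedJ
  congr 1
  ext p
  constructor
  · rintro ⟨B, hB, rfl⟩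
    exact ⟨B.image Sum.inr, ⟨B, hB, rfl⟩, (prod_inr_eq n m K B).symm⟩
  · rintro ⟨U, ⟨B, hB, rfl⟩, rfl⟩
    exact ⟨B, hB, (prod_inr_eq n m K B).symm⟩

lemma mixedIJ_eq (q r : ℕ) :
    mixedI n m K q * mixedJ n m K r =
      Ideal.span ((fun U => ∏ i ∈ U, (X i : MvPolynomial (Fin n ⊕ Fin m) K)) '' GIJ n m q r) := by
  rw [mixedI_eq, mixedJ_eq, Ideal.span_mul_span']
  congr 1
  ext p
  constructor
  · rintro ⟨-, ⟨U, ⟨A, hA, rfl⟩, rfl⟩, -, ⟨V, ⟨B, hB, rfl⟩, rfl⟩, rfl⟩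
    refine ⟨A.image Sum.inl ∪ B.image Sum.inr, ⟨A, B, hA, hB, rfl⟩, ?_⟩
    show (∏ i ∈ A.image Sum.inl ∪ B.image Sum.inr, (X i : MvPolynomial (Fin n ⊕ Fin m) K)) =
      (∏ i ∈ A.image Sum.inl, X i) * ∏ i ∈ B.image Sum.inr, X i
    exact Finset.prod_union (disj_inl_inr A B)
  · rintro ⟨U, ⟨A, B, hA, hB, rfl⟩, rfl⟩
    refine ⟨∏ i ∈ A.image Sum.inl, X i, ⟨A.image Sum.inl, ⟨A, hA, rfl⟩, rfl⟩,
      ∏ i ∈ B.image Sum.inr, X i, ⟨B.image Sum.inr, ⟨B, hB, rfl⟩, rfl⟩, ?_⟩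
    show (∏ i ∈ A.image Sum.inl, (X i : MvPolynomial (Fin n ⊕ Fin m) K)) *
        ∏ i ∈ B.image Sum.inr, X i = ∏ i ∈ A.image Sum.inl ∪ B.image Sum.inr, X i
    exact (Finset.prod_union (disj_inl_inr A B)).symm

end MixedEq

/-- (Proposition 3.1.)  The Alexander dual of the mixed product ideal
`∑_{i=1}^s I_{q_i} J_{r_i}` (indexed here by `i = 0,…,s-1`) equals
`I_{n-q_1+1} + ∑_{i=1}^{s-1} I_{n-q_{i+1}+1} J_{m-r_i+1} + J_{m-r_s+1}`. -/
theorem alexDual_mixed_product_sum (n m : ℕ) (K : Type*) [Field K]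
    (s : ℕ) (hs : 1 ≤ s) (q r : ℕ → ℕ)
    (hq : ∀ i j, i < j → j < s → q i < q j)
    (hr : ∀ i j, i < j → j < s → r j < r i)
    (hqn : q (s - 1) ≤ n) (hrm : r 0 ≤ m)
    (hproper : (∑ i ∈ Finset.range s, mixedI n m K (q i) * mixedJ n m K (r i)) ≠ ⊤) :
    alexDual (∑ i ∈ Finset.range s, mixedI n m K (q i) * mixedJ n m K (r i)) =
      mixedI n m K (n - q 0 + 1) +
        (∑ i ∈ Finset.range (s - 1), mixedI n m K (n - q (i + 1) + 1) *
            mixedJ n m K (m - r i + 1)) +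
        mixedJ n m K (m - r (s - 1) + 1) := by
  classical
  -- monotonicity of q, r
  have hqle : ∀ i j, i ≤ j → j < s → q i ≤ q j := by
    intro i j hij hjs
    rcases eq_or_lt_of_le hij with h | h
    · exact h ▸ le_rfl
    · exact (hq i j h hjs).le
  have hrle : ∀ i j, i ≤ j → j < s → r j ≤ r i := by
    intro i j hij hjs
    rcases eq_or_lt_of_le hij with h | h
    · exact h ▸ le_rfl
    · exact (hr i j h hjs).le
  have hqn' : ∀ i, i < s → q i ≤ n := fun i hi =>
    le_trans (hqle i (s - 1) (by omega) (by omega)) hqn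
  have hrm' : ∀ i, i < s → r i ≤ m := fun i hi =>
    le_trans (hrle 0 i (by omega) hi) hrm
  set L := ∑ i ∈ Finset.range s, mixedI n m K (q i) * mixedJ n m K (r i) with hLdef
  set img := fun D : Set (Finset (Fin n ⊕ Fin m)) =>
    (fun U => ∏ i ∈ U, (X i : MvPolynomial (Fin n ⊕ Fin m) K)) '' D with himg
  -- the generating family of L
  set famL : Set (Finset (Fin n ⊕ Fin m)) :=
    ⋃ i ∈ Finset.range s, GIJ n m (q i) (r i) with hfamL
  have hL : L = Ideal.span (img famL) := by
    rw [hLdef, Finset.sum_congr rfl (fun i _ => mixedIJ_eq n m K (q i) (r i)), span_img_sum]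
  -- membership criterion for L on squarefree monomials
  have hmemL : ∀ T : Finset (Fin n ⊕ Fin m),
      ((∏ i ∈ T, (X i : MvPolynomial (Fin n ⊕ Fin m) K)) ∈ L ↔
        ∃ i < s, q i ≤ T.toLeft.card ∧ r i ≤ T.toRight.card) := by
    intro T
    rw [hL, himg, prodX_mem_span_iff]
    constructor
    · rintro ⟨U, hU, hUT⟩
      rw [hfamL] at hU
      simp only [Set.mem_iUnion, Finset.mem_range] at hU
      obtain ⟨i, his, A, B, hA, hB, rfl⟩ := hU
      refine ⟨i, his, ?_, ?_⟩
      · rw [← hA, ← toLeft_image_inl (n := n) (m := m) A]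
        exact Finset.card_le_card (Finset.toLeft_subset_toLeft
          ((Finset.union_subset_iff.mp hUT).1))
      · rw [← hB, ← toRight_image_inr (n := n) (m := m) B]
        exact Finset.card_le_card (Finset.toRight_subset_toRight
          ((Finset.union_subset_iff.mp hUT).2))
    · rintro ⟨i, his, hqi, hri⟩
      obtain ⟨A, hAs, hA⟩ := Finset.exists_subset_card_eq hqi
      obtain ⟨B, hBs, hB⟩ := Finset.exists_subset_card_eq hri
      refine ⟨A.image Sum.inl ∪ B.image Sum.inr, ?_, ?_⟩
      · rw [hfamL]
        simp only [Set.mem_iUnion, Finset.mem_range]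
        exact ⟨i, his, A, B, hA, hB, rfl⟩
      · exact Finset.union_subset (image_inl_subset.mpr hAs) (image_inr_subset.mpr hBs)
  -- rewrite the Alexander dual as a span over a family of finsets
  have hAD : alexDual L = Ideal.span (img {S | (∏ i ∈ Sᶜ,
      (X i : MvPolynomial (Fin n ⊕ Fin m) K)) ∉ L}) := by
    unfold alexDual
    congr 1
    ext p
    constructor
    · rintro ⟨S, h, rfl⟩; exact ⟨S, h, rfl⟩
    · rintro ⟨S, h, rfl⟩; exact ⟨S, h, rfl⟩
  -- rewrite the RHS as a span
  set famR : Set (Finset (Fin n ⊕ Fin m)) :=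
    GI n m (n - q 0 + 1) ∪ ((⋃ i ∈ Finset.range (s - 1),
      GIJ n m (n - q (i + 1) + 1) (m - r i + 1)) ∪ GJ n m (m - r (s - 1) + 1)) with hfamR
  have hRHS : mixedI n m K (n - q 0 + 1) +
        (∑ i ∈ Finset.range (s - 1), mixedI n m K (n - q (i + 1) + 1) *
            mixedJ n m K (m - r i + 1)) +
        mixedJ n m K (m - r (s - 1) + 1) = Ideal.span (img famR) := by
    rw [Finset.sum_congr rfl
        (fun i _ => mixedIJ_eq n m K (n - q (i + 1) + 1) (m - r i + 1)),
      span_img_sum, mixedI_eq, mixedJ_eq, add_assoc, span_add_span, span_add_span]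
    congr 1
    rw [hfamR, himg]
    dsimp only
    rw [Set.image_union, Set.image_union]
  rw [hAD, hRHS]
  -- complement cardinalities
  have hcardL : ∀ S : Finset (Fin n ⊕ Fin m), (Sᶜ).toLeft.card = n - S.toLeft.card := by
    intro S
    rw [toLeft_compl, Finset.card_compl, Fintype.card_fin]
  have hcardR : ∀ S : Finset (Fin n ⊕ Fin m), (Sᶜ).toRight.card = m - S.toRight.card := by
    intro S
    rw [toRight_compl, Finset.card_compl, Fintype.card_fin]
  -- the nonmembership condition, quantitatively
  have hcond : ∀ S : Finset (Fin n ⊕ Fin m),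
      ((∏ i ∈ Sᶜ, (X i : MvPolynomial (Fin n ⊕ Fin m) K)) ∉ L ↔
        ∀ i < s, ¬(q i ≤ n - S.toLeft.card ∧ r i ≤ m - S.toRight.card)) := by
    intro S
    rw [hmemL (Sᶜ), hcardL, hcardR]
    constructor
    · intro h i his hc
      exact h ⟨i, his, hc⟩
    · rintro h ⟨i, his, hc⟩
      exact h i his hc
  apply le_antisymm
  · -- alexDual L ⊆ RHS
    rw [Ideal.span_le]
    rintro p ⟨S, hS, rfl⟩
    have hSc := (hcond S).mp hS
    set a := S.toLeft.card with ha
    set b := S.toRight.card with hb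
    have han : a ≤ n := card_le_fin _
    have hbm : b ≤ m := card_le_fin _
    -- key combinatorial step
    have key : (n - q 0 + 1 ≤ a) ∨
        (∃ i, i < s - 1 ∧ n - q (i + 1) + 1 ≤ a ∧ m - r i + 1 ≤ b) ∨
        (m - r (s - 1) + 1 ≤ b) := by
      by_cases h1 : n - q 0 + 1 ≤ a
      · exact Or.inl h1
      have hq0 : q 0 ≤ n := hqn' 0 hs
      have hb0 : m - r 0 + 1 ≤ b := by
        have := hSc 0 hs
        have := hrm' 0 hs
        omega
      by_cases h3 : m - r (s - 1) + 1 ≤ b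
      · exact Or.inr (Or.inr h3)
      -- find the minimal j with ¬(m - r j + 1 ≤ b)
      have hex : ∃ j, ¬(m - r j + 1 ≤ b) := ⟨s - 1, h3⟩
      obtain ⟨j, hjspec, hjmin⟩ : ∃ j, ¬(m - r j + 1 ≤ b) ∧ ∀ k < j, m - r k + 1 ≤ b :=
        ⟨Nat.find hex, Nat.find_spec hex, fun k hk => by
          have := Nat.find_min hex hk; omega⟩
      have hjle : j ≤ s - 1 := by
        by_contra hcon
        have := hjmin (s - 1) (by omega)
        exact h3 this
      have hjne : j ≠ 0 := by
        intro h0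
        rw [h0] at hjspec
        exact hjspec hb0
      have hjprev : m - r (j - 1) + 1 ≤ b := hjmin (j - 1) (by omega)
      have hjs : j < s := by omega
      have hqa : n - q j + 1 ≤ a := by
        have h := hSc j hjs
        have hqj : q j ≤ n := hqn' j hjs
        have hrj : r j ≤ m := hrm' j hjs
        omega
      refine Or.inr (Or.inl ⟨j - 1, by omega, ?_, hjprev⟩)
      have hj1 : j - 1 + 1 = j := by omega
      rwa [hj1]
    apply prodX_mem_span_iff.mpr
    rcases key with h | ⟨i, his, hia, hib⟩ | h
    · obtain ⟨A, hAs, hA⟩ := Finset.exists_subset_card_eq h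
      exact ⟨A.image Sum.inl, Or.inl ⟨A, hA, rfl⟩, image_inl_subset.mpr hAs⟩
    · obtain ⟨A, hAs, hA⟩ := Finset.exists_subset_card_eq hia
      obtain ⟨B, hBs, hB⟩ := Finset.exists_subset_card_eq hib
      refine ⟨A.image Sum.inl ∪ B.image Sum.inr, Or.inr (Or.inl ?_),
        Finset.union_subset (image_inl_subset.mpr hAs) (image_inr_subset.mpr hBs)⟩
      simp only [Set.mem_iUnion, Finset.mem_range]
      exact ⟨i, his, A, B, hA, hB, rfl⟩
    · obtain ⟨B, hBs, hB⟩ := Finset.exists_subset_card_eq h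
      exact ⟨B.image Sum.inr, Or.inr (Or.inr ⟨B, hB, rfl⟩), image_inr_subset.mpr hBs⟩
  · -- RHS ⊆ alexDual L
    rw [Ideal.span_le]
    rintro p ⟨V, hV, rfl⟩
    apply Ideal.subset_span
    -- it suffices that each V ∈ famR satisfies the complement condition
    refine ⟨V, ?_, rfl⟩
    apply (hcond V).mpr
    rcases hV with ⟨A, hA, rfl⟩ | hV | ⟨B, hB, rfl⟩
    · -- V ∈ GI (n - q 0 + 1)
      rintro i his ⟨hqi, hri⟩
      have hAn : A.card ≤ n := card_le_fin A
      have h1 : (A.image (Sum.inl : Fin n → Fin n ⊕ Fin m)).toLeft.card = A.card := by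
        rw [toLeft_image_inl]
      rw [h1, hA] at hqi
      have : q 0 ≤ q i := hqle 0 i (by omega) his
      rw [hA] at hAn
      omega
    · -- V in the middle part
      simp only [Set.mem_iUnion, Finset.mem_range] at hV
      obtain ⟨i, his1, A, B, hA, hB, rfl⟩ := hV
      rintro j hjs ⟨hqj, hrj⟩
      have hAn : A.card ≤ n := card_le_fin A
      have hBm : B.card ≤ m := card_le_fin B
      have h1 : (A.image (Sum.inl : Fin n → Fin n ⊕ Fin m) ∪
          B.image Sum.inr).toLeft.card = A.card := by
        rw [Finset.toLeft_union, toLeft_image_inl, toLeft_image_inr, Finset.union_empty]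
      have h2 : (A.image (Sum.inl : Fin n → Fin n ⊕ Fin m) ∪
          B.image Sum.inr).toRight.card = B.card := by
        rw [Finset.toRight_union, toRight_image_inl, toRight_image_inr, Finset.empty_union]
      rw [h1, hA] at hqj
      rw [h2, hB] at hrj
      rw [hA] at hAn
      rw [hB] at hBm
      rcases le_or_gt j i with hji | hji
      · -- r i ≤ r j, contradiction with hrj
        have : r i ≤ r j := hrle j i hji (by omega)
        omega
      · -- q (i+1) ≤ q j
        have : q (i + 1) ≤ q j := hqle (i + 1) j hji hjs
        omega
    · -- V ∈ GJ (m - r (s-1) + 1)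
      rintro i his ⟨hqi, hri⟩
      have hBm : B.card ≤ m := card_le_fin B
      have h2 : (B.image (Sum.inr : Fin m → Fin n ⊕ Fin m)).toRight.card = B.card := by
        rw [toRight_image_inr]
      rw [h2, hB] at hri
      have : r (s - 1) ≤ r i := hrle i (s - 1) (by omega) (by omega)
      rw [hB] at hBm
      omega
end

section
/- Let $\Delta$ be the simplicial complex on $\{x_1,\dots,x_n\}\cup\{y_1,\dots,y_m\}$ whose facets are $\bigcup_{k=1}^{s'}\mathcal{F}_k$, where $\mathcal{F}_k$ consists of all subsets with exactly $q(k)$ $x$-vertices and $r(k)$ $y$-vertices, $q(1)<\dots<q(s')\le n$, $r(1)>\dots>r(s')\ge 0$. If $\Delta$ is strongly connected, then $q(i+1)=q(i)+1$ and $r(i+1)=r(i)-1$ for all $i=1,\dots,s'-1$. -/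
/-- Number of `x`-vertices of a subset of `{x_1,…,x_n} ∪ {y_1,…,y_m}`. -/
def xcard {n m : ℕ} (F : Finset (Fin n ⊕ Fin m)) : ℕ :=
  (F.filter fun v => v.isLeft).card

/-- Number of `y`-vertices of a subset of `{x_1,…,x_n} ∪ {y_1,…,y_m}`. -/
def ycard {n m : ℕ} (F : Finset (Fin n ⊕ Fin m)) : ℕ :=
  (F.filter fun v => v.isRight).card

/-- The facets of the complex: `⋃_{k=1}^{s'} 𝓕_k`, where `𝓕_k` is the family
of all subsets with exactly `q(k)` `x`-vertices and `r(k)` `y`-vertices. -/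
lemma card_eq_xy {n m : ℕ} (F : Finset (Fin n ⊕ Fin m)) :
    F.card = xcard F + ycard F := by
  have h : F.filter (fun v => v.isRight) = F.filter (fun v => ¬ v.isLeft) := by
    apply Finset.filter_congr
    intro v _
    cases v <;> simp
  unfold xcard ycard
  rw [h, Finset.card_filter_add_card_filter_not]

lemma xcard_mono {n m : ℕ} {F G : Finset (Fin n ⊕ Fin m)} (h : F ⊆ G) :
    xcard F ≤ xcard G := Finset.card_le_card (Finset.filter_subset_filter _ h)

lemma step_bound {n m : ℕ} {F G : Finset (Fin n ⊕ Fin m)}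
    (hcard : F.card = G.card) (hint : (F ∩ G).card + 1 = F.card) :
    xcard G ≤ xcard F + 1 := by
  have h1 : (G ∩ F).card + (G \ F).card = G.card := Finset.card_inter_add_card_sdiff G F
  have h2 : (G \ F).card = 1 := by
    rw [Finset.inter_comm] at h1; omega
  have h3 : xcard G = xcard (G ∩ F) + xcard (G \ F) := by
    unfold xcard
    rw [← Finset.card_union_of_disjoint, ← Finset.filter_union]
    · congr 1
      rw [Finset.union_comm, Finset.sdiff_union_inter]
    · exact Finset.disjoint_filter_filter (Finset.disjoint_left.mpr
        fun a ha hb => (Finset.mem_sdiff.mp hb).2 (Finset.mem_inter.mp ha).2)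
  have h4 : xcard (G ∩ F) ≤ xcard F := xcard_mono Finset.inter_subset_right
  have h5 : xcard (G \ F) ≤ 1 := h2 ▸ Finset.card_filter_le _ _
  omega

lemma exists_facet {n m : ℕ} (q r : ℕ) (hq : q ≤ n) (hr : r ≤ m) :
    ∃ F : Finset (Fin n ⊕ Fin m), xcard F = q ∧ ycard F = r := by
  obtain ⟨A, -, hA⟩ := Finset.exists_subset_card_eq (s := (Finset.univ : Finset (Fin n))) (n := q)
    (by simpa using hq)
  obtain ⟨B, -, hB⟩ := Finset.exists_subset_card_eq (s := (Finset.univ : Finset (Fin m))) (n := r)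
    (by simpa using hr)
  refine ⟨A.map (Function.Embedding.inl) ∪ B.map (Function.Embedding.inr), ?_, ?_⟩ <;>
    simp [xcard, ycard, Finset.filter_union, Finset.filter_map, Function.comp_def, hA, hB]

lemma nat_ivt (t : ℕ) (f : ℕ → ℕ) (hstep : ∀ j < t, f (j + 1) ≤ f j + 1)
    (v : ℕ) (h0 : f 0 ≤ v) (ht : v ≤ f t) : ∃ j ≤ t, f j = v := by
  induction t with
  | zero => exact ⟨0, le_refl _, le_antisymm h0 ht⟩
  | succ t ih =>
    by_cases hv : v ≤ f t
    · obtain ⟨j, hj, hjv⟩ := ih (fun j hj => hstep j (by omega)) hv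
      exact ⟨j, by omega, hjv⟩
    · have := hstep t (by omega)
      exact ⟨t + 1, le_refl _, by omega⟩

def famFacets (n m s' : ℕ) (qv rv : ℕ → ℕ) : Set (Finset (Fin n ⊕ Fin m)) :=
  {F | ∃ k, 1 ≤ k ∧ k ≤ s' ∧ xcard F = qv k ∧ ycard F = rv k}

/-- A pure set of facets is strongly connected if every two facets are joined
by a chain of facets in which consecutive facets intersect in codimension
one, i.e. `dim (F_i ∩ F_{i+1}) = dim Δ - 1`, i.e.
`|F_i ∩ F_{i+1}| = |F_i| - 1`. -/
def StronglyConnected {n m : ℕ} (Fac : Set (Finset (Fin n ⊕ Fin m))) : Prop :=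
  ∀ F ∈ Fac, ∀ G ∈ Fac, ∃ (t : ℕ) (c : ℕ → Finset (Fin n ⊕ Fin m)),
    c 0 = F ∧ c t = G ∧ (∀ i ≤ t, c i ∈ Fac) ∧
    ∀ i < t, (c i ∩ c (i + 1)).card + 1 = (c i).card

/-- (Part of Theorem 3.12.)  If the (pure) complex with facets
`⋃_{k=1}^{s'} 𝓕_k` is strongly connected, then `q(i+1) = q(i) + 1` and
`r(i+1) = r(i) - 1` for all `i = 1,…,s'-1`. -/
theorem consecutive_of_stronglyConnected (n m s' : ℕ) (hs' : 1 ≤ s')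
    (qv rv : ℕ → ℕ)
    (hq : ∀ i j, 1 ≤ i → i < j → j ≤ s' → qv i < qv j)
    (hr : ∀ i j, 1 ≤ i → i < j → j ≤ s' → rv j < rv i)
    (hqn : qv s' ≤ n) (hrm : rv 1 ≤ m)
    (hpure : ∀ k, 1 ≤ k → k ≤ s' → qv k + rv k = qv 1 + rv 1)
    (hconn : StronglyConnected (famFacets n m s' qv rv)) :
    ∀ i, 1 ≤ i → i < s' → qv (i + 1) = qv i + 1 ∧ rv i = rv (i + 1) + 1 := by
  intro i hi1 his
  have hcardF : ∀ F ∈ famFacets n m s' qv rv, F.card = qv 1 + rv 1 := by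
    rintro F ⟨k, hk1, hks, hx, hy⟩
    rw [card_eq_xy, hx, hy]
    exact hpure k hk1 hks
  have hqle : ∀ k, 1 ≤ k → k ≤ s' → qv k ≤ n := by
    intro k hk1 hks
    rcases eq_or_lt_of_le hks with h | h
    · exact h ▸ hqn
    · exact le_of_lt (lt_of_lt_of_le (hq k s' hk1 h le_rfl) hqn)
  have hrle : ∀ k, 1 ≤ k → k ≤ s' → rv k ≤ m := by
    intro k hk1 hks
    rcases eq_or_lt_of_le hk1 with h | h
    · exact h ▸ hrm
    · exact le_of_lt (lt_of_lt_of_le (hr 1 k le_rfl h hks) hrm)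
  have hi1s : i + 1 ≤ s' := his
  obtain ⟨F, hFx, hFy⟩ := exists_facet (qv i) (rv i)
    (hqle i hi1 (le_of_lt his)) (hrle i hi1 (le_of_lt his))
  obtain ⟨G, hGx, hGy⟩ := exists_facet (qv (i + 1)) (rv (i + 1))
    (hqle (i + 1) (by omega) hi1s) (hrle (i + 1) (by omega) hi1s)
  have hF : F ∈ famFacets n m s' qv rv := ⟨i, hi1, le_of_lt his, hFx, hFy⟩
  have hG : G ∈ famFacets n m s' qv rv := ⟨i + 1, by omega, hi1s, hGx, hGy⟩
  obtain ⟨t, c, hc0, hct, hmem, hstep⟩ := hconn F hF G hG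
  have key : qv (i + 1) = qv i + 1 := by
    by_contra hne
    have hlt : qv i + 1 < qv (i + 1) := by
      have := hq i (i + 1) hi1 (by omega) hi1s
      omega
    obtain ⟨j, hjt, hj⟩ := nat_ivt t (fun j => xcard (c j))
      (fun j hjt => step_bound
        (by rw [hcardF _ (hmem j (le_of_lt hjt)), hcardF _ (hmem (j + 1) hjt)])
        (hstep j hjt))
      (qv i + 1) (by beta_reduce; rw [hc0, hFx]; omega) (by beta_reduce; rw [hct, hGx]; omega)
    obtain ⟨k, hk1, hks, hkx, -⟩ := hmem j hjt
    have hqk : qv k = qv i + 1 := by rw [← hkx, hj]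
    have hki : i < k := by
      by_contra hik
      push_neg at hik
      rcases eq_or_lt_of_le hik with h | h
      · rw [h] at hqk; omega
      · have := hq k i hk1 h (le_of_lt his); omega
    have hki2 : k < i + 1 := by
      by_contra hik
      push_neg at hik
      rcases eq_or_lt_of_le hik with h | h
      · rw [← h] at hqk; omega
      · have := hq (i + 1) k (by omega) h hks; omega
    omega
  refine ⟨key, ?_⟩
  have h1 := hpure i hi1 (le_of_lt his)
  have h2 := hpure (i + 1) (by omega) hi1s
  omega
end
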